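/- Let G be a graph of order n ≥ k+2. Then L_k(G) = k if and only if for every (k+1)-subset X of V(G), either the induced subgraph G[X] contains a vertex of degree k (in G[X]), or the k+1 vertices of X have a common neighbour in G. -/

import Mathlib

open Finset

/-- `B` is a `k`-limited packing in `G`: every closed neighbourhood contains
at most `k` vertices of `B`. -/
def limPack {V : Type*} [Fintype V] [DecidableEq V] (G : SimpleGraph V)
    [DecidableRel G.Adj] (k : ℕ) (B : Finset V) : Prop :=
  ∀ v : V, (insert v (G.neighborFinset v) ∩ B).card ≤ k

/-- The `k`-limited packing number `L_k(G)`. -/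
noncomputable def limPackNum {V : Type*} [Fintype V] [DecidableEq V] (G : SimpleGraph V)
    [DecidableRel G.Adj] (k : ℕ) : ℕ :=
  sSup {n | ∃ B : Finset V, limPack G k B ∧ B.card = n}

theorem stmt_3 {V : Type*} [Fintype V] [DecidableEq V] (G : SimpleGraph V)
    [DecidableRel G.Adj] (k : ℕ) (hk : 1 ≤ k) (hn : k + 2 ≤ Fintype.card V) :
    limPackNum G k = k ↔
      ∀ X : Finset V, X.card = k + 1 →
        (∃ v ∈ X, ∀ u ∈ X, u ≠ v → G.Adj v u) ∨
        (∃ a : V, ∀ x ∈ X, G.Adj a x) := by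
  have hbdd : BddAbove {n | ∃ B : Finset V, limPack G k B ∧ B.card = n} := by
    refine ⟨Fintype.card V, ?_⟩
    rintro n ⟨B, -, rfl⟩
    exact Finset.card_le_univ B
  have hkS : k ∈ {n | ∃ B : Finset V, limPack G k B ∧ B.card = n} := by
    obtain ⟨B, -, hB⟩ := Finset.exists_subset_card_eq (s := (univ : Finset V)) (n := k)
      (by simpa using (by omega : k ≤ Fintype.card V))
    exact ⟨B, fun v => le_trans (Finset.card_le_card Finset.inter_subset_right) hB.le, hB⟩
  constructor
  · intro hEq X hX
    by_contra hcon
    push_neg at hcon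
    obtain ⟨h1, h2⟩ := hcon
    have hpack : limPack G k X := by
      intro v
      by_contra hv
      push_neg at hv
      have heq : insert v (G.neighborFinset v) ∩ X = X :=
        Finset.eq_of_subset_of_card_le Finset.inter_subset_right (by omega)
      have hsub : X ⊆ insert v (G.neighborFinset v) := by
        intro x hx
        rw [← heq] at hx
        exact (Finset.mem_inter.1 hx).1
      by_cases hvX : v ∈ X
      · obtain ⟨u, huX, hune, hnadj⟩ := h1 v hvX
        have := hsub huX
        rcases Finset.mem_insert.1 this with h | h
        · exact hune h
        · exact hnadj (G.mem_neighborFinset v u |>.1 h)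
      · obtain ⟨x, hxX, hnadj⟩ := h2 v
        have := hsub hxX
        rcases Finset.mem_insert.1 this with h | h
        · exact hvX (h ▸ hxX)
        · exact hnadj (G.mem_neighborFinset v x |>.1 h)
    have : k + 1 ≤ limPackNum G k := le_csSup hbdd ⟨X, hpack, hX⟩
    omega
  · intro h
    refine le_antisymm (csSup_le ⟨k, hkS⟩ ?_) (le_csSup hbdd hkS)
    rintro n ⟨B, hB, rfl⟩
    by_contra hgt
    push_neg at hgt
    obtain ⟨X, hXB, hXcard⟩ := Finset.exists_subset_card_eq (s := B) (n := k + 1) (by omega)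
    rcases h X hXcard with ⟨v, hvX, hv⟩ | ⟨a, ha⟩
    · have hsub : X ⊆ insert v (G.neighborFinset v) ∩ B := by
        intro x hx
        refine Finset.mem_inter.2 ⟨?_, hXB hx⟩
        by_cases hxv : x = v
        · exact Finset.mem_insert.2 (Or.inl hxv)
        · exact Finset.mem_insert.2 (Or.inr ((G.mem_neighborFinset v x).2 (hv x hx hxv)))
      have := le_trans (Finset.card_le_card hsub) (hB v)
      omega
    · have hsub : X ⊆ insert a (G.neighborFinset a) ∩ B := by
        intro x hx
        exact Finset.mem_inter.2
          ⟨Finset.mem_insert.2 (Or.inr ((G.mem_neighborFinset a x).2 (ha x hx))), hXB hx⟩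
      have := le_trans (Finset.card_le_card hsub) (hB a)
      omega
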